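/- Let ρ be a positive real number with ρ ≠ 1 and set β = (ρ+1)/(2(ρ−1)). Define the 2×2 matrices over A: CFK₀ = [[−2K, ((ρ+1)/ρ)·S], [−(1+ρ)·N, 2K']] and CFK₀ᵗ = [[2K, −((ρ+1)/ρ)·S], [(1+ρ)·N, −2K']]. Then CFK₀ᵗ · CFK₀ = ((ρ−1)²/ρ) · diag((K − β·1)(K + β·1), (K' − β·1)(K' + β·1)); in particular the off-diagonal entries of the product vanish. -/

import Mathlib

theorem CFK0t_mul_CFK0 (A : Type*) [Ring A] [Algebra ℝ A]
    (S N K K' : A)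
    (hSN : S * N = -(1/4 : ℝ) • (1 : A) + K ^ 2)
    (hNS : N * S = -(1/4 : ℝ) • (1 : A) + K' ^ 2)
    (hNK : N * K = K' * N)
    (hKS : K * S = S * K')
    (ρ : ℝ) (hρ : 0 < ρ) (hρ1 : ρ ≠ 1)
    (β : ℝ) (hβ : β = (ρ + 1) / (2 * (ρ - 1)))
    (CFK₀ CFK₀t : Matrix (Fin 2) (Fin 2) A)
    (hCFK₀ : CFK₀ = !![-(2 : ℝ) • K, ((ρ + 1)/ρ) • S; -(1 + ρ) • N, (2 : ℝ) • K'])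
    (hCFK₀t : CFK₀t = !![(2 : ℝ) • K, -((ρ + 1)/ρ) • S; (1 + ρ) • N, -(2 : ℝ) • K']) :
    CFK₀t * CFK₀ =
      ((ρ - 1)^2 / ρ) •
        !![(K - β • (1 : A)) * (K + β • (1 : A)), 0;
           0, (K' - β • (1 : A)) * (K' + β • (1 : A))] := by
  have hρ0 : ρ ≠ 0 := ne_of_gt hρ
  have hρ1' : ρ - 1 ≠ 0 := sub_ne_zero.mpr hρ1
  have h2 : (-2 + ρ * 2) ≠ 0 := by intro h; apply hρ1'; linarith
  subst hCFK₀ hCFK₀t hβ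
  set b : ℝ := (ρ + 1) / (2 * (ρ - 1)) with hb
  rw [Matrix.mul_fin_two]
  have key : ∀ X Y Z : A, X * Y = -(1/4 : ℝ) • (1 : A) + Z ^ 2 →
      ((ρ + 1)/ρ * (1 + ρ)) • (X * Y) - (4:ℝ) • Z ^ 2 =
      ((ρ - 1)^2 / ρ) • ((Z - b • (1 : A)) * (Z + b • (1 : A))) := by
    intro X Y Z hXY
    rw [hXY]
    simp only [mul_add, add_mul, sub_mul, mul_sub, smul_mul_assoc, mul_smul_comm,
      mul_one, one_mul, smul_smul, smul_add, smul_sub, ← pow_two]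
    clear_value b
    subst hb
    match_scalars <;> (try ring1) <;> (field_simp [h2]; ring)
  have h00 : (2:ℝ) • K * -(2:ℝ) • K + -((ρ + 1)/ρ) • S * -(1 + ρ) • N =
      ((ρ - 1)^2 / ρ) • ((K - b • (1 : A)) * (K + b • (1 : A))) := by
    rw [← key S N K hSN, smul_mul_smul_comm, smul_mul_smul_comm, ← pow_two]
    match_scalars <;> ring
  have h11 : (1 + ρ) • N * ((ρ + 1)/ρ) • S + -(2:ℝ) • K' * (2:ℝ) • K' =
      ((ρ - 1)^2 / ρ) • ((K' - b • (1 : A)) * (K' + b • (1 : A))) := by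
    rw [← key N S K' hNS, smul_mul_smul_comm, smul_mul_smul_comm, ← pow_two]
    match_scalars <;> ring
  have h01 : (2:ℝ) • K * ((ρ + 1)/ρ) • S + -((ρ + 1)/ρ) • S * (2:ℝ) • K' = 0 := by
    rw [smul_mul_smul_comm, smul_mul_smul_comm, hKS]
    match_scalars; ring
  have h10 : (1 + ρ) • N * -(2:ℝ) • K + -(2:ℝ) • K' * -(1 + ρ) • N = 0 := by
    rw [smul_mul_smul_comm, smul_mul_smul_comm, hNK]
    match_scalars; ring
  rw [h00, h01, h10, h11]
  ext i j
  fin_cases i <;> fin_cases j <;> simp [Matrix.smul_apply]
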